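/- Let m, n ≥ 1 and let 1 ≤ r ≤ m. For every natural number s in the r-th chamber, i.e. (r−1)n ≤ s ≤ rn, the Gaussian polynomial coefficient is given by the truncated sum: P_m^n(s) = W_m(mn − s) + Σ_{i=r}^{m−1} (−1)^{m−i} Σ_{k=0}^{n i − s − s_{m−i}} W_i(k) · W_{m−i}(n i − s − s_{m−i} − k), where any inner sum whose upper limit is negative is empty (equals 0). -/

import Mathlib

open Finset

/-- `W t d` : the number of tuples `x` of nonnegative integers with `∑ i, d i * x i = t`. -/
noncomputable def W (t : ℤ) (d : List ℕ) : ℕ :=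
  Nat.card {x : Fin d.length → ℕ // ∑ i, (d.get i : ℤ) * (x i : ℤ) = t}

/-- `Wm j t` : the restricted partition function `W(t, (1,2,…,j))`. -/
noncomputable def Wm (j : ℕ) (t : ℤ) : ℕ :=
  W t ((List.range j).map (· + 1))

/-- `P m n s` : the Gaussian polynomial coefficient, i.e. the number of tuples
`(x_1,…,x_m)` of nonnegative integers with `∑ i, i * x_i = s` and `∑ i, x_i ≤ n`. -/
noncomputable def P (m n s : ℕ) : ℕ :=
  Nat.card {x : Fin m → ℕ // (∑ i : Fin m, ((i : ℕ) + 1) * x i = s) ∧ ∑ i, x i ≤ n}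

/-- `tri j = j(j+1)/2`, the `j`-th triangular number. -/
def tri (j : ℕ) : ℕ := j * (j + 1) / 2

open Fin

section aux

lemma finite_aux {N B : ℕ} {p : (Fin N → ℕ) → Prop} (h : ∀ x, p x → ∀ i, x i ≤ B) :
    Finite {x // p x} := by
  apply Finite.of_injective (fun x (i : Fin N) => (⟨x.1 i, Nat.lt_succ_of_le (h x.1 x.2 i)⟩ : Fin (B+1)))
  intro a b hab
  ext i
  exact congrArg Fin.val (congrFun hab i)

def ePair {N : ℕ} (p : (Fin (N+1) → ℕ) → Prop) :
    {x : Fin (N+1) → ℕ // p x} ≃ {y : (Fin N → ℕ) × ℕ // p (Fin.snoc y.1 y.2)} where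
  toFun x := ⟨(Fin.init x.1, x.1 (Fin.last N)), by rw [Fin.snoc_init_self]; exact x.2⟩
  invFun y := ⟨Fin.snoc y.1.1 y.1.2, y.2⟩
  left_inv x := by apply Subtype.ext; exact Fin.snoc_init_self x.1
  right_inv y := Subtype.ext (by simp)

def eSplit {A : Type*} (q : A × ℕ → Prop) :
    {y : A × ℕ // q y} ≃ {a : A // q (a,0)} ⊕ {y : A × ℕ // q (y.1, y.2+1)} where
  toFun y := match hy : y with
    | ⟨(a, 0), h⟩ => Sum.inl ⟨a, h⟩
    | ⟨(a, c+1), h⟩ => Sum.inr ⟨(a, c), h⟩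
  invFun z := match z with
    | Sum.inl ⟨a, h⟩ => ⟨(a, 0), h⟩
    | Sum.inr ⟨(a, c), h⟩ => ⟨(a, c+1), h⟩
  left_inv y := by rcases y with ⟨⟨a, _ | c⟩, h⟩ <;> rfl
  right_inv z := by rcases z with ⟨a, h⟩ | ⟨⟨a, c⟩, h⟩ <;> rfl

lemma card_split {N : ℕ} (p : (Fin (N+1) → ℕ) → Prop) [hf : Finite {x // p x}] :
    Nat.card {x // p x} =
      Nat.card {y : Fin N → ℕ // p (Fin.snoc y 0)} +
      Nat.card {x : Fin (N+1) → ℕ // p (Fin.snoc (Fin.init x) (x (Fin.last N) + 1))} := by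
  have e1 := (ePair p).trans (eSplit (fun y => p (Fin.snoc y.1 y.2)))
  have e2 : {x : Fin (N+1) → ℕ // p (Fin.snoc (Fin.init x) (x (Fin.last N) + 1))} ≃
      {y : (Fin N → ℕ) × ℕ // p (Fin.snoc y.1 (y.2+1))} :=
    (ePair _).trans (Equiv.subtypeEquiv (Equiv.refl _) (by intro a; simp))
  have hfy : Finite {y : (Fin N → ℕ) × ℕ // p (Fin.snoc y.1 y.2)} := Finite.of_equiv _ (ePair p)
  have hf1 : Finite {y : Fin N → ℕ // p (Fin.snoc y 0)} :=
    Finite.of_injective (fun y => (⟨(y.1, 0), y.2⟩ : {y : (Fin N → ℕ) × ℕ // p (Fin.snoc y.1 y.2)}))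
      (by intro a b hab
          rcases a with ⟨a1, ha⟩; rcases b with ⟨b1, hb⟩
          simp_all)
  have hf2 : Finite {y : (Fin N → ℕ) × ℕ // p (Fin.snoc y.1 (y.2+1))} :=
    Finite.of_injective (fun y => (⟨(y.1.1, y.1.2+1), y.2⟩ : {y : (Fin N → ℕ) × ℕ // p (Fin.snoc y.1 y.2)}))
      (by intro a b hab
          rcases a with ⟨⟨a1, a2⟩, ha⟩; rcases b with ⟨⟨b1, b2⟩, hb⟩
          simp_all)
  rw [Nat.card_congr e1, Nat.card_sum, Nat.card_congr e2]

end aux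

section wm

lemma Wm_card (j : ℕ) (t : ℤ) :
    Wm j t = Nat.card {x : Fin j → ℕ // ∑ i : Fin j, (((i:ℕ)+1 : ℕ) : ℤ) * (x i : ℤ) = t} := by
  unfold Wm W
  have h : ((List.range j).map (· + 1)).length = j := by simp
  apply Nat.card_congr
  refine Equiv.subtypeEquiv (Equiv.arrowCongr (finCongr h) (Equiv.refl ℕ)) ?_
  intro x
  rw [← Fin.sum_congr' (fun i => ((((List.range j).map (· + 1)).get i : ℕ) : ℤ) * (x i : ℤ)) h.symm]
  apply Eq.congr_left
  apply Finset.sum_congr rfl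
  intro i _
  have : (((List.range j).map (· + 1)).get (Fin.cast h.symm i) : ℕ) = (i : ℕ) + 1 := by
    simp [List.get_eq_getElem]
  rw [this]
  rfl

lemma wsumZ_snoc (N : ℕ) (y : Fin N → ℕ) (c : ℕ) :
    ∑ i : Fin (N+1), (((i:ℕ)+1 : ℕ) : ℤ) * ((Fin.snoc y c : Fin (N+1) → ℕ) i : ℤ)
      = (∑ i : Fin N, (((i:ℕ)+1 : ℕ) : ℤ) * (y i : ℤ)) + ((N:ℤ)+1) * (c : ℤ) := by
  rw [Fin.sum_univ_castSucc]
  simp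

instance Wm_finite (j : ℕ) (t : ℤ) :
    Finite {x : Fin j → ℕ // ∑ i : Fin j, (((i:ℕ)+1 : ℕ) : ℤ) * (x i : ℤ) = t} := by
  rcases lt_or_ge t 0 with ht | ht
  · have : IsEmpty {x : Fin j → ℕ // ∑ i : Fin j, (((i:ℕ)+1 : ℕ) : ℤ) * (x i : ℤ) = t} := by
      constructor; rintro ⟨x, hx⟩
      have : (0:ℤ) ≤ ∑ i : Fin j, (((i:ℕ)+1 : ℕ) : ℤ) * (x i : ℤ) :=
        Finset.sum_nonneg fun i _ => by positivity
      omega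
    infer_instance
  · apply finite_aux (B := t.toNat)
    intro x hx i
    have h1 : (x i : ℤ) ≤ t := by
      calc (x i : ℤ) ≤ (((i:ℕ)+1 : ℕ) : ℤ) * (x i : ℤ) := by
            have : (1:ℤ) ≤ (((i:ℕ)+1 : ℕ) : ℤ) := by push_cast; omega
            nlinarith [Int.ofNat_nonneg (x i)]
        _ ≤ _ := Finset.single_le_sum (f := fun i : Fin j => (((i:ℕ)+1 : ℕ) : ℤ) * (x i : ℤ))
            (fun i _ => by positivity) (Finset.mem_univ i)
      |>.trans_eq hx
    omega

lemma Wm_neg {j : ℕ} {t : ℤ} (ht : t < 0) : Wm j t = 0 := by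
  rw [Wm_card]
  have : IsEmpty {x : Fin j → ℕ // ∑ i : Fin j, (((i:ℕ)+1 : ℕ) : ℤ) * (x i : ℤ) = t} := by
    constructor; rintro ⟨x, hx⟩
    have : (0:ℤ) ≤ ∑ i : Fin j, (((i:ℕ)+1 : ℕ) : ℤ) * (x i : ℤ) :=
      Finset.sum_nonneg fun i _ => by positivity
    omega
  exact @Nat.card_of_isEmpty _ this

lemma Wm_zero (t : ℤ) : Wm 0 t = if t = 0 then 1 else 0 := by
  rw [Wm_card]
  split_ifs with h
  · subst h
    have : Nonempty {x : Fin 0 → ℕ // ∑ i : Fin 0, (((i:ℕ)+1 : ℕ) : ℤ) * (x i : ℤ) = 0} :=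
      ⟨⟨finZeroElim, by simp⟩⟩
    have : Subsingleton {x : Fin 0 → ℕ // ∑ i : Fin 0, (((i:ℕ)+1 : ℕ) : ℤ) * (x i : ℤ) = 0} := by
      constructor; rintro ⟨x, _⟩ ⟨y, _⟩
      apply Subtype.ext; funext i; exact i.elim0
    exact Nat.card_unique
  · have : IsEmpty {x : Fin 0 → ℕ // ∑ i : Fin 0, (((i:ℕ)+1 : ℕ) : ℤ) * (x i : ℤ) = t} := by
      constructor; rintro ⟨x, hx⟩; simp at hx; omega
    exact @Nat.card_of_isEmpty _ this

lemma Wm_succ (j : ℕ) (t : ℤ) :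
    Wm (j+1) t = Wm j t + Wm (j+1) (t - ((j:ℤ)+1)) := by
  rw [Wm_card, card_split (fun x : Fin (j+1) → ℕ =>
    ∑ i : Fin (j+1), (((i:ℕ)+1 : ℕ) : ℤ) * (x i : ℤ) = t)]
  congr 1
  · rw [Wm_card]
    apply Nat.card_congr
    refine Equiv.subtypeEquiv (Equiv.refl _) fun y => ?_
    rw [wsumZ_snoc]
    simp
  · rw [Wm_card]
    apply Nat.card_congr
    refine Equiv.subtypeEquiv (Equiv.refl _) fun x => ?_
    rw [wsumZ_snoc]
    have : ∑ i : Fin (j+1), (((i:ℕ)+1 : ℕ) : ℤ) * (x i : ℤ)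
        = (∑ i : Fin j, (((i:ℕ)+1 : ℕ) : ℤ) * (Fin.init x i : ℤ)) + ((j:ℤ)+1) * (x (Fin.last j) : ℤ) := by
      rw [Fin.sum_univ_castSucc]
      simp [Fin.init]
    simp only [Equiv.refl_apply]
    constructor
    · intro hx; rw [this]; push_cast at hx ⊢; linarith
    · intro hx; rw [this] at hx; push_cast at hx ⊢; linarith

end wm

section p

instance P_finite (m n s : ℕ) :
    Finite {x : Fin m → ℕ // (∑ i : Fin m, ((i : ℕ) + 1) * x i = s) ∧ ∑ i, x i ≤ n} := by
  apply finite_aux (B := s)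
  rintro x ⟨h1, _⟩ i
  calc x i ≤ ((i:ℕ)+1) * x i := Nat.le_mul_of_pos_left _ (Nat.succ_pos _)
    _ ≤ s := h1 ▸ Finset.single_le_sum (f := fun i : Fin m => ((i:ℕ)+1) * x i)
        (fun _ _ => Nat.zero_le _) (Finset.mem_univ i)

lemma P_left_zero (n s : ℕ) : P 0 n s = if s = 0 then 1 else 0 := by
  unfold P
  split_ifs with h
  · subst h
    have : Nonempty {x : Fin 0 → ℕ // (∑ i : Fin 0, ((i : ℕ) + 1) * x i = 0) ∧ ∑ i, x i ≤ n} :=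
      ⟨⟨finZeroElim, by simp⟩⟩
    have : Subsingleton {x : Fin 0 → ℕ // (∑ i : Fin 0, ((i : ℕ) + 1) * x i = 0) ∧ ∑ i, x i ≤ n} := by
      constructor; rintro ⟨x, _⟩ ⟨y, _⟩
      apply Subtype.ext; funext i; exact i.elim0
    exact Nat.card_unique
  · have : IsEmpty {x : Fin 0 → ℕ // (∑ i : Fin 0, ((i : ℕ) + 1) * x i = s) ∧ ∑ i, x i ≤ n} := by
      constructor; rintro ⟨x, hx, _⟩; simp at hx; omega
    exact @Nat.card_of_isEmpty _ this

lemma P_right_zero (m s : ℕ) : P m 0 s = if s = 0 then 1 else 0 := by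
  unfold P
  split_ifs with h
  · subst h
    have : Nonempty {x : Fin m → ℕ // (∑ i : Fin m, ((i : ℕ) + 1) * x i = 0) ∧ ∑ i, x i ≤ 0} :=
      ⟨⟨fun _ => 0, by simp⟩⟩
    have : Subsingleton {x : Fin m → ℕ // (∑ i : Fin m, ((i : ℕ) + 1) * x i = 0) ∧ ∑ i, x i ≤ 0} := by
      constructor; rintro ⟨x, _, hx⟩ ⟨y, _, hy⟩
      apply Subtype.ext; funext i
      have h1 : x i = 0 := by
        have : x i ≤ ∑ i, x i := Finset.single_le_sum (fun _ _ => Nat.zero_le _) (Finset.mem_univ i)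
        omega
      have h2 : y i = 0 := by
        have : y i ≤ ∑ i, y i := Finset.single_le_sum (fun _ _ => Nat.zero_le _) (Finset.mem_univ i)
        omega
      show x i = y i
      rw [h1, h2]
    exact Nat.card_unique
  · have : IsEmpty {x : Fin m → ℕ // (∑ i : Fin m, ((i : ℕ) + 1) * x i = s) ∧ ∑ i, x i ≤ 0} := by
      constructor; rintro ⟨x, hx, hx2⟩
      apply h
      have hx0 : ∀ i, x i = 0 := by
        intro i
        have : x i ≤ ∑ i, x i := Finset.single_le_sum (fun _ _ => Nat.zero_le _) (Finset.mem_univ i)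
        omega
      rw [← hx]
      exact Finset.sum_eq_zero fun i _ => by rw [hx0 i, Nat.mul_zero]
    exact @Nat.card_of_isEmpty _ this

lemma P_succ (m n s : ℕ) :
    P (m+1) (n+1) s = P m (n+1) s + (if m+1 ≤ s then P (m+1) n (s - (m+1)) else 0) := by
  unfold P
  rw [card_split (fun x : Fin (m+1) → ℕ =>
    (∑ i : Fin (m+1), ((i : ℕ) + 1) * x i = s) ∧ ∑ i, x i ≤ n+1)]
  congr 1
  · apply Nat.card_congr
    refine Equiv.subtypeEquiv (Equiv.refl _) fun y => ?_
    simp [Fin.sum_univ_castSucc]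
  · have key : ∀ x : Fin (m+1) → ℕ,
        ((∑ i : Fin (m+1), ((i : ℕ) + 1) *
            (Fin.snoc (Fin.init x) (x (Fin.last m) + 1) : Fin (m+1) → ℕ) i = s) ∧
          (∑ i, (Fin.snoc (Fin.init x) (x (Fin.last m) + 1) : Fin (m+1) → ℕ) i) ≤ n+1)
        ↔ ((∑ i : Fin (m+1), ((i : ℕ) + 1) * x i + (m+1) = s) ∧ (∑ i, x i) + 1 ≤ n+1) := by
      intro x
      have e1 : ∑ i : Fin (m+1), ((i : ℕ) + 1) *
          (Fin.snoc (Fin.init x) (x (Fin.last m) + 1) : Fin (m+1) → ℕ) i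
          = ∑ i : Fin (m+1), ((i : ℕ) + 1) * x i + (m+1) := by
        rw [Fin.sum_univ_castSucc, Fin.sum_univ_castSucc (f := fun i : Fin (m+1) => ((i : ℕ) + 1) * x i)]
        simp [Fin.init, Nat.mul_add, Nat.mul_succ]
        ring
      have e2 : ∑ i, (Fin.snoc (Fin.init x) (x (Fin.last m) + 1) : Fin (m+1) → ℕ) i
          = (∑ i, x i) + 1 := by
        rw [Fin.sum_univ_castSucc, Fin.sum_univ_castSucc (f := fun i : Fin (m+1) => x i)]
        simp [Fin.init]
        omega
      rw [e1, e2]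
    split_ifs with h
    · apply Nat.card_congr
      refine Equiv.subtypeEquiv (Equiv.refl _) fun x => ?_
      rw [Equiv.refl_apply, key x]
      constructor
      · rintro ⟨h1, h2⟩; exact ⟨by omega, by omega⟩
      · rintro ⟨h1, h2⟩; exact ⟨by omega, by omega⟩
    · have : IsEmpty {x : Fin (m+1) → ℕ //
          (∑ i : Fin (m+1), ((i : ℕ) + 1) *
            (Fin.snoc (Fin.init x) (x (Fin.last m) + 1) : Fin (m+1) → ℕ) i = s) ∧
          (∑ i, (Fin.snoc (Fin.init x) (x (Fin.last m) + 1) : Fin (m+1) → ℕ) i) ≤ n+1} := by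
        constructor; rintro ⟨x, hx⟩
        rw [key x] at hx
        omega
      exact @Nat.card_of_isEmpty _ this

end p

section symm

def sig (M n : ℕ) (x : Fin (M+1) → ℕ) : Fin (M+1) → ℕ :=
  fun j => if h : (j:ℕ) < M then x ⟨M-1-(j:ℕ), by omega⟩ else n - ∑ i, x i

lemma sig_castSucc (M n : ℕ) (x : Fin (M+1) → ℕ) (j : Fin M) :
    sig M n x (Fin.castSucc j) = x ⟨M-1-(j:ℕ), by omega⟩ := by
  have hj : ((Fin.castSucc j : Fin (M+1)) : ℕ) < M := by simpa using j.2
  simp only [sig, dif_pos hj]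
  congr 1

lemma sig_last (M n : ℕ) (x : Fin (M+1) → ℕ) :
    sig M n x (Fin.last M) = n - ∑ i, x i := by
  simp only [sig, Fin.val_last, lt_irrefl, dif_neg (lt_irrefl M).elim]
  simp

lemma sum_sig (M n : ℕ) (x : Fin (M+1) → ℕ) (h2 : ∑ i, x i ≤ n) :
    ∑ i, sig M n x i = n - x (Fin.last M) := by
  rw [Fin.sum_univ_castSucc]
  simp only [sig_castSucc, sig_last]
  have h3 : ∑ j : Fin M, x ⟨M-1-(j:ℕ), by omega⟩ = ∑ j : Fin M, x (Fin.castSucc j) := by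
    apply Fintype.sum_bijective Fin.rev Fin.rev_bijective
    intro j
    have hj := j.2
    congr 1
    apply Fin.ext
    simp [Fin.val_rev]
    omega
  have h4 : ∑ i, x i = ∑ j : Fin M, x (Fin.castSucc j) + x (Fin.last M) :=
    Fin.sum_univ_castSucc x
  have h5 : x (Fin.last M) ≤ ∑ i, x i :=
    Finset.single_le_sum (fun _ _ => Nat.zero_le _) (Finset.mem_univ _)
  omega

lemma wsum_sig (M n s : ℕ) (x : Fin (M+1) → ℕ)
    (h1 : ∑ i : Fin (M+1), ((i:ℕ)+1) * x i = s) (h2 : ∑ i, x i ≤ n) (hs : s ≤ (M+1)*n) :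
    ∑ i : Fin (M+1), ((i:ℕ)+1) * sig M n x i = (M+1)*n - s := by
  rw [Fin.sum_univ_castSucc]
  simp only [sig_castSucc, sig_last, Fin.coe_castSucc, Fin.val_last]
  have hrev : ∑ j : Fin M, ((j:ℕ)+1) * x ⟨M-1-(j:ℕ), by omega⟩
      = ∑ j : Fin M, (M-(j:ℕ)) * x (Fin.castSucc j) := by
    apply Fintype.sum_bijective Fin.rev Fin.rev_bijective
    intro j
    have hj := j.2
    have hv : ((Fin.rev j : Fin M) : ℕ) = M - 1 - (j:ℕ) := by rw [Fin.val_rev]; omega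
    congr 1
    · rw [hv]; omega
    · congr 1
      apply Fin.ext
      rw [Fin.coe_castSucc, hv]
  rw [hrev]
  -- arithmetic
  have hsplit : ∑ j : Fin M, (M-(j:ℕ)) * x (Fin.castSucc j)
      + ∑ j : Fin M, ((j:ℕ)+1) * x (Fin.castSucc j)
      = (M+1) * ∑ j : Fin M, x (Fin.castSucc j) := by
    rw [← Finset.sum_add_distrib, Finset.mul_sum]
    apply Finset.sum_congr rfl
    intro j _
    have := j.2
    rw [← Nat.add_mul]
    congr 1
    omega
  have h1' : ∑ j : Fin M, ((j:ℕ)+1) * x (Fin.castSucc j) + (M+1) * x (Fin.last M) = s := by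
    rw [← h1, Fin.sum_univ_castSucc]
    simp
  have h4 : ∑ i, x i = ∑ j : Fin M, x (Fin.castSucc j) + x (Fin.last M) :=
    Fin.sum_univ_castSucc x
  zify [h2, hs]
  zify at hsplit h1' h4
  linear_combination hsplit - h1' - (((M:ℤ))+1) * h4
end symm

lemma sig_invol (M n : ℕ) (x : Fin (M+1) → ℕ) (h2 : ∑ i, x i ≤ n) :
    sig M n (sig M n x) = x := by
  funext j
  by_cases hj : (j:ℕ) < M
  · have e1 : sig M n (sig M n x) j = (sig M n x) ⟨M-1-(j:ℕ), by omega⟩ := dif_pos hj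
    rw [e1]
    have hlt : (M-1-(j:ℕ)) < M := by omega
    have e2 : (sig M n x) ⟨M-1-(j:ℕ), by omega⟩ = x ⟨M-1-(M-1-(j:ℕ)), by omega⟩ := dif_pos hlt
    rw [e2]
    congr 1
    apply Fin.ext
    show M-1-(M-1-(j:ℕ)) = (j:ℕ)
    omega
  · have hJ : j = Fin.last M := by apply Fin.ext; have := j.2; simp; omega
    subst hJ
    rw [sig_last, sum_sig M n x h2]
    have h5 : x (Fin.last M) ≤ ∑ i, x i :=
      Finset.single_le_sum (fun _ _ => Nat.zero_le _) (Finset.mem_univ _)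
    omega

lemma P_symm (M n s s' : ℕ) (h : s + s' = (M+1)*n) : P (M+1) n s = P (M+1) n s' := by
  unfold P
  apply Nat.card_congr
  refine ⟨fun x => ⟨sig M n x.1, ?_, ?_⟩, fun x => ⟨sig M n x.1, ?_, ?_⟩, ?_, ?_⟩
  · rw [wsum_sig M n s x.1 x.2.1 x.2.2 (by omega)]; omega
  · rw [sum_sig M n x.1 x.2.2]; omega
  · rw [wsum_sig M n s' x.1 x.2.1 x.2.2 (by omega)]; omega
  · rw [sum_sig M n x.1 x.2.2]; omega
  · intro x; apply Subtype.ext; exact sig_invol M n x.1 x.2.2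
  · intro x; apply Subtype.ext; exact sig_invol M n x.1 x.2.2

section series
open PowerSeries

noncomputable def Ws (j : ℕ) : PowerSeries ℤ := PowerSeries.mk fun t => (Wm j (t : ℤ) : ℤ)
noncomputable def Gp (m n : ℕ) : PowerSeries ℤ := PowerSeries.mk fun s => (P m n s : ℤ)
noncomputable def Dd (m : ℕ) : PowerSeries ℤ :=
  ∏ a ∈ Finset.range m, (1 - (PowerSeries.X : PowerSeries ℤ)^(a+1))
noncomputable def Aa (m n : ℕ) : PowerSeries ℤ :=
  ∏ a ∈ Finset.range m, (1 - (PowerSeries.X : PowerSeries ℤ)^(n+1+a))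

lemma Ws_zero : Ws 0 = 1 := by
  ext t
  rw [Ws, coeff_mk, coeff_one, Wm_zero]
  by_cases h : t = 0
  · subst h; simp
  · rw [if_neg (show ¬((t:ℕ) : ℤ) = 0 by exact_mod_cast h), if_neg h]
    simp

lemma Ws_succ (j : ℕ) : (1 - (X : PowerSeries ℤ)^(j+1)) * Ws (j+1) = Ws j := by
  ext t
  rw [sub_mul, one_mul, map_sub, coeff_X_pow_mul', Ws, Ws, coeff_mk, coeff_mk]
  have := Wm_succ j (t : ℤ)
  split_ifs with h
  · rw [coeff_mk]
    have harg : ((t : ℤ) - ((j:ℤ)+1)) = ((t - (j+1) : ℕ) : ℤ) := by push_cast; omega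
    rw [harg] at this
    rw [this]
    push_cast
    ring
  · have harg : ((t : ℤ) - ((j:ℤ)+1)) < 0 := by push_cast; omega
    rw [this, Wm_neg harg, coeff_mk]
    push_cast
    ring

lemma Dd_Ws (j : ℕ) : Dd j * Ws j = 1 := by
  induction j with
  | zero => rw [Ws_zero, Dd]; simp
  | succ j ih =>
    rw [Dd, Finset.prod_range_succ, ← Dd, mul_assoc, Ws_succ, ih]

lemma Gp_left_zero (n : ℕ) : Gp 0 n = 1 := by
  ext s
  rw [Gp, coeff_mk, coeff_one, P_left_zero]
  split_ifs <;> simp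

lemma Gp_right_zero (m : ℕ) : Gp m 0 = 1 := by
  ext s
  rw [Gp, coeff_mk, coeff_one, P_right_zero]
  split_ifs <;> simp

lemma Gp_succ (m n : ℕ) :
    Gp (m+1) (n+1) = Gp m (n+1) + (X : PowerSeries ℤ)^(m+1) * Gp (m+1) n := by
  ext s
  rw [map_add, coeff_X_pow_mul', Gp, Gp, Gp, coeff_mk, coeff_mk, P_succ]
  split_ifs with h
  · rw [coeff_mk]; push_cast; ring
  · push_cast; ring

end series


lemma tri_zero : tri 0 = 0 := rfl

lemma tri_succ (j : ℕ) : tri (j+1) = tri j + (j+1) := by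
  have h1 : tri j * 2 = j * (j+1) := Nat.div_mul_cancel (Nat.even_mul_succ_self j).two_dvd
  have h2 : tri (j+1) * 2 = (j+1) * (j+2) := Nat.div_mul_cancel (Nat.even_mul_succ_self (j+1)).two_dvd
  have h3 : (j+1) * (j+2) = j * (j+1) + 2 * (j+1) := by ring
  omega

lemma tri_pos (j : ℕ) : 1 ≤ tri (j+1) := by
  rw [tri_succ]; omega

section series2
open PowerSeries

lemma Aa_zero (n : ℕ) : Aa 0 n = 1 := by rw [Aa]; simp

lemma Aa_succ (m n : ℕ) : Aa (m+1) n = (1 - (X : PowerSeries ℤ)^(n+1)) * Aa m (n+1) := by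
  rw [Aa, Finset.prod_range_succ']
  have h1 : ∀ a ∈ Finset.range m, (1 - (X : PowerSeries ℤ)^(n+1+(a+1))) = (1 - (X : PowerSeries ℤ)^((n+1)+1+a)) := by
    intro a _
    have he : n+1+(a+1) = (n+1)+1+a := by omega
    rw [he]
  rw [Finset.prod_congr rfl h1, ← Aa, mul_comm]

lemma Aa_last (m n : ℕ) : Aa (m+1) n = Aa m n * (1 - (X : PowerSeries ℤ)^(n+1+m)) := by
  rw [Aa, Finset.prod_range_succ, ← Aa]

lemma Aa_eq (m n : ℕ) : Aa m n = Gp m n * Dd m := by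
  induction m generalizing n with
  | zero => rw [Aa_zero, Gp_left_zero, Dd]; simp
  | succ m ihm =>
    induction n with
    | zero =>
      rw [Gp_right_zero, one_mul, Aa, Dd]
      apply Finset.prod_congr rfl
      intro a _
      have he : 0+1+a = a+1 := by omega
      rw [he]
    | succ n ihn =>
      have key : Aa (m+1) (n+1) = (1 - (X : PowerSeries ℤ)^(m+1)) * Aa m (n+1)
          + (X : PowerSeries ℤ)^(m+1) * Aa (m+1) n := by
        rw [Aa_last m (n+1), Aa_succ m n]
        have hx : (X : PowerSeries ℤ)^(n+1+1+m) = (X:PowerSeries ℤ)^(m+1) * (X:PowerSeries ℤ)^(n+1) := by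
          rw [← pow_add]
          have he : n+1+1+m = m+1+(n+1) := by omega
          rw [he]
        rw [hx]
        ring
      rw [key, ihm, ihn, Gp_succ]
      have hD : Dd (m+1) = Dd m * (1 - (X : PowerSeries ℤ)^(m+1)) := by
        rw [Dd, Finset.prod_range_succ, ← Dd]
      rw [hD]
      ring

noncomputable def Sser (m n : ℕ) : PowerSeries ℤ :=
  ∑ j ∈ Finset.range (m+1), (-1 : PowerSeries ℤ)^j * (X : PowerSeries ℤ)^(j*n + tri j) * Gp j (m-j)

lemma Sser_zero (n : ℕ) : Sser 0 n = 1 := by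
  rw [Sser]
  simp [Gp_left_zero, tri_zero]

lemma Sser_rec (m n : ℕ) : Sser (m+1) n = (1 - (X : PowerSeries ℤ)^(n+1)) * Sser m (n+1) := by
  rw [Sser, Finset.sum_range_succ']
  have hf0 : (-1 : PowerSeries ℤ)^0 * (X : PowerSeries ℤ)^(0*n + tri 0) * Gp 0 (m+1-0) = 1 := by
    simp [Gp_left_zero, tri_zero]
  rw [hf0]
  have hstep : ∀ j ∈ Finset.range (m+1),
      (-1 : PowerSeries ℤ)^(j+1) * (X : PowerSeries ℤ)^((j+1)*n + tri (j+1)) * Gp (j+1) (m+1-(j+1))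
      = (-(X : PowerSeries ℤ)^(n+1)) * ((-1 : PowerSeries ℤ)^j * (X:PowerSeries ℤ)^(j*(n+1) + tri j) * Gp j (m-j))
        + ((-1 : PowerSeries ℤ)^(j+1) * (X:PowerSeries ℤ)^((j+1)*(n+1) + tri (j+1)) *
            (if j < m then Gp (j+1) (m-j-1) else 0)) := by
    intro j hj
    rw [Finset.mem_range] at hj
    have hmj : m + 1 - (j+1) = m - j := by omega
    rw [hmj]
    have hGp : Gp (j+1) (m-j) = Gp j (m-j) + (X : PowerSeries ℤ)^(j+1) * (if j < m then Gp (j+1) (m-j-1) else 0) := by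
      by_cases h : j < m
      · rw [if_pos h]
        have h1 : m - j = (m-j-1)+1 := by omega
        rw [h1, Gp_succ, Nat.add_sub_cancel]
      · have hjm : j = m := by omega
        subst hjm
        rw [if_neg h]
        simp [Nat.sub_self, Gp_right_zero]
    rw [hGp]
    have he1 : (j+1)*n + tri (j+1) = (n+1) + (j*(n+1) + tri j) := by
      rw [tri_succ]; ring
    have he2 : (j+1)*n + tri (j+1) + (j+1) = (j+1)*(n+1) + tri (j+1) := by ring
    rw [mul_add]
    congr 1
    · rw [he1, pow_add]
      ring
    · rw [← mul_assoc, mul_assoc _ _ ((X:PowerSeries ℤ)^(j+1)), ← pow_add, he2]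
  rw [Finset.sum_congr rfl hstep, Finset.sum_add_distrib]
  have hsum1 : ∑ j ∈ Finset.range (m+1),
      (-(X : PowerSeries ℤ)^(n+1)) * ((-1 : PowerSeries ℤ)^j * (X:PowerSeries ℤ)^(j*(n+1) + tri j) * Gp j (m-j))
      = (-(X : PowerSeries ℤ)^(n+1)) * Sser m (n+1) := by
    rw [Sser, Finset.mul_sum]
  have hsum2 : ∑ j ∈ Finset.range (m+1),
      ((-1 : PowerSeries ℤ)^(j+1) * (X:PowerSeries ℤ)^((j+1)*(n+1) + tri (j+1)) *
        (if j < m then Gp (j+1) (m-j-1) else 0))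
      = Sser m (n+1) - 1 := by
    rw [Finset.sum_range_succ]
    rw [if_neg (lt_irrefl m), mul_zero, add_zero]
    have hcongr : ∀ j ∈ Finset.range m,
        ((-1 : PowerSeries ℤ)^(j+1) * (X:PowerSeries ℤ)^((j+1)*(n+1) + tri (j+1)) *
          (if j < m then Gp (j+1) (m-j-1) else 0))
        = ((-1 : PowerSeries ℤ)^(j+1) * (X:PowerSeries ℤ)^((j+1)*(n+1) + tri (j+1)) * Gp (j+1) (m-(j+1))) := by
      intro j hj
      rw [Finset.mem_range] at hj
      rw [if_pos hj]
      have he : m-j-1 = m-(j+1) := by omega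
      rw [he]
    rw [Finset.sum_congr rfl hcongr]
    have hS : Sser m (n+1) = (∑ j ∈ Finset.range m,
        (-1 : PowerSeries ℤ)^(j+1) * (X:PowerSeries ℤ)^((j+1)*(n+1) + tri (j+1)) * Gp (j+1) (m-(j+1))) + 1 := by
      rw [Sser, Finset.sum_range_succ']
      congr 1
      simp [Gp_left_zero, tri_zero]
    rw [hS]
    ring
  rw [hsum1, hsum2]
  ring

lemma Sser_eq (m n : ℕ) : Sser m n = Aa m n := by
  induction m generalizing n with
  | zero => rw [Sser_zero, Aa_zero]
  | succ m ih => rw [Sser_rec, Aa_succ, ih]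

lemma Gp_main (m n : ℕ) : Gp m n =
    ∑ j ∈ Finset.range (m+1), (-1 : PowerSeries ℤ)^j * (X : PowerSeries ℤ)^(j*n + tri j) *
      (Ws j * Ws (m-j)) := by
  have h1 : Gp m n = Sser m n * Ws m := by
    calc Gp m n = Gp m n * (Dd m * Ws m) := by rw [Dd_Ws]; ring
      _ = (Gp m n * Dd m) * Ws m := by ring
      _ = Aa m n * Ws m := by rw [Aa_eq]
      _ = Sser m n * Ws m := by rw [Sser_eq]
  rw [h1, Sser, Finset.sum_mul]
  apply Finset.sum_congr rfl
  intro j hj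
  rw [Finset.mem_range] at hj
  have hj' : j ≤ m := by omega
  have hD : Gp j (m-j) * Dd j * Dd (m-j) = Dd m := by
    rw [← Aa_eq]
    have hsplit : Dd m = Dd (m-j) * ∏ a ∈ Finset.range j, (1 - (X : PowerSeries ℤ)^((m-j)+a+1)) := by
      rw [Dd, Dd]
      conv_lhs => rw [show m = (m-j)+j by omega]
      exact Finset.prod_range_add _ _ _
    rw [hsplit, Aa]
    have hc : ∀ a ∈ Finset.range j, (1 - (X : PowerSeries ℤ)^((m-j)+1+a)) = (1 - (X : PowerSeries ℤ)^((m-j)+a+1)) := by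
      intro a _
      have he : (m-j)+1+a = (m-j)+a+1 := by omega
      rw [he]
    rw [Finset.prod_congr rfl hc]
    ring
  have hterm : Gp j (m-j) * Ws m = Ws j * Ws (m-j) := by
    have h2 : Gp j (m-j) * Ws m = Gp j (m-j) * Ws m * (Dd j * Ws j) * (Dd (m-j) * Ws (m-j)) := by
      rw [Dd_Ws, Dd_Ws]; ring
    rw [h2]
    have h3 : Gp j (m-j) * Ws m * (Dd j * Ws j) * (Dd (m-j) * Ws (m-j))
        = (Gp j (m-j) * Dd j * Dd (m-j)) * Ws m * (Ws j * Ws (m-j)) := by ring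
    rw [h3, hD]
    have h4 : Dd m * Ws m * (Ws j * Ws (m-j)) = (Dd m * Ws m) * (Ws j * Ws (m-j)) := by ring
    rw [h4, Dd_Ws, one_mul]
  rw [mul_assoc, hterm]

end series2

section final
open PowerSeries

lemma coeff_term (s' e j i' : ℕ) :
    (PowerSeries.coeff s') ((-1 : PowerSeries ℤ)^j * (X : PowerSeries ℤ)^e * (Ws j * Ws i'))
      = (-1:ℤ)^j * (if e ≤ s' then
          ∑ k ∈ Finset.range (s' - e + 1), (Wm j (k:ℤ) : ℤ) * (Wm i' ((s' - e - k : ℕ) : ℤ) : ℤ)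
        else 0) := by
  have h1 : ((-1 : PowerSeries ℤ))^j * (X : PowerSeries ℤ)^e * (Ws j * Ws i')
      = PowerSeries.C ((-1)^j) * ((X : PowerSeries ℤ)^e * (Ws j * Ws i')) := by
    rw [map_pow, map_neg, map_one]
    ring
  rw [h1, coeff_C_mul]
  congr 1
  rw [mul_comm ((X : PowerSeries ℤ)^e), coeff_mul_X_pow']
  split_ifs with h
  · rw [coeff_mul, Finset.Nat.sum_antidiagonal_eq_sum_range_succ_mk]
    apply Finset.sum_congr rfl
    intro k _
    rw [Ws, Ws, coeff_mk, coeff_mk]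
  · rfl

lemma conv_zero (N i' : ℕ) :
    ∑ k ∈ Finset.range (N+1), (Wm 0 (k:ℤ) : ℤ) * (Wm i' ((N - k : ℕ) : ℤ) : ℤ)
      = (Wm i' (N : ℤ) : ℤ) := by
  rw [Finset.sum_eq_single 0]
  · rw [Wm_zero]; simp
  · intro b _ hb
    rw [Wm_zero, if_neg (by exact_mod_cast hb)]
    simp
  · intro h
    exact absurd (Finset.mem_range.mpr (Nat.succ_pos N)) h

lemma term_eq (M n s s' : ℕ) (hss' : s + s' = (M+1)*n) (j : ℕ) (hj : j ≤ M) :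
    PowerSeries.coeff s' ((-1 : PowerSeries ℤ)^(j+1) * (X : PowerSeries ℤ)^((j+1)*n + tri (j+1))
        * (Ws (j+1) * Ws ((M+1)-(j+1))))
      = (-1:ℤ)^(j+1) * ∑ k ∈ Finset.range (((n:ℤ)*((M-j : ℕ):ℤ) - (s:ℤ) - (tri (j+1) : ℤ) + 1).toNat),
          (Wm (M-j) (k:ℤ) : ℤ) * (Wm (j+1) ((n:ℤ)*((M-j : ℕ):ℤ) - (s:ℤ) - (tri (j+1) : ℤ) - (k:ℤ)) : ℤ) := by
  have hMj : (M+1)-(j+1) = M-j := by omega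
  rw [hMj, coeff_term]
  set NZ : ℤ := (n:ℤ)*((M-j : ℕ):ℤ) - (s:ℤ) - (tri (j+1) : ℤ) with hNZdef
  have hcast : ((M - j : ℕ) : ℤ) = (M : ℤ) - (j : ℤ) := by
    push_cast [Nat.cast_sub hj]; ring
  have hs'cast : (s' : ℤ) = ((M:ℤ)+1)*(n:ℤ) - (s:ℤ) := by
    have : ((s:ℤ)) + (s':ℤ) = ((M:ℤ)+1)*(n:ℤ) := by exact_mod_cast hss'
    linarith
  congr 1
  by_cases hc : (j+1)*n + tri (j+1) ≤ s'
  · rw [if_pos hc]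
    set N : ℕ := s' - ((j+1)*n + tri (j+1)) with hNdef
    have hNZ : (N : ℤ) = NZ := by
      rw [hNdef, Nat.cast_sub hc, hs'cast, hNZdef, hcast]
      push_cast
      ring
    have htoNat : (NZ + 1).toNat = N + 1 := by
      rw [← hNZ]
      simp
    rw [htoNat]
    rw [← Finset.sum_range_reflect]
    apply Finset.sum_congr rfl
    intro t ht
    rw [Finset.mem_range] at ht
    have h1 : N + 1 - 1 - t = N - t := by omega
    have h2 : N - (N - t) = t := by omega
    rw [h1, h2]
    have ha1 : ((N - t : ℕ) : ℤ) = NZ - (t:ℤ) := by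
      rw [Nat.cast_sub (by omega), hNZ]
    rw [ha1]
    exact mul_comm _ _
  · rw [if_neg hc]
    have hNZneg : NZ + 1 ≤ 0 := by
      by_contra hpos
      push_neg at hpos
      apply hc
      have : (((j+1)*n + tri (j+1) : ℕ) : ℤ) ≤ (s' : ℤ) := by
        rw [hs'cast]
        push_cast
        rw [hNZdef, hcast] at hpos
        nlinarith [hpos]
      exact_mod_cast this
    rw [Int.toNat_of_nonpos hNZneg]
    simp

end final


/-- in the `r`-th chamber `(r−1)n ≤ s ≤ rn`, the Gaussian polynomial
coefficient is given by the truncated sum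
`P_m^n(s) = W_m(mn−s) + Σ_{i=r}^{m−1} (−1)^{m−i}
Σ_{k=0}^{n i − s − s_{m−i}} W_i(k) W_{m−i}(n i − s − s_{m−i} − k)`. -/
theorem gaussian_chamber_formula (m n r s : ℕ) (hm : 1 ≤ m) (hn : 1 ≤ n)
    (hr1 : 1 ≤ r) (hrm : r ≤ m) (hs1 : (r - 1) * n ≤ s) (hs2 : s ≤ r * n) :
    (P m n s : ℤ) = (Wm m ((m : ℤ) * (n : ℤ) - (s : ℤ)) : ℤ) +
      ∑ i ∈ Finset.Icc r (m - 1), (-1 : ℤ) ^ (m - i) *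
        ∑ k ∈ Finset.range
            (((n : ℤ) * (i : ℤ) - (s : ℤ) - (tri (m - i) : ℤ) + 1).toNat),
          (Wm i (k : ℤ) : ℤ) *
            (Wm (m - i) ((n : ℤ) * (i : ℤ) - (s : ℤ) - (tri (m - i) : ℤ) - (k : ℤ)) : ℤ) := by
  obtain ⟨M, rfl⟩ : ∃ M, m = M + 1 := ⟨m - 1, by omega⟩
  simp only [Nat.add_sub_cancel]
  have hsm : s ≤ (M+1) * n := hs2.trans (Nat.mul_le_mul_right n hrm)
  set s' : ℕ := (M+1)*n - s with hs'def
  have hss' : s + s' = (M+1)*n := by omega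
  have hs'cast : (s' : ℤ) = (((M+1) : ℕ) : ℤ)*(n:ℤ) - (s:ℤ) := by
    have h := hss'
    zify at h
    push_cast at h ⊢
    linarith
  rw [P_symm M n s s' hss']
  have hcoeff : ((P (M+1) n s' : ℕ) : ℤ) = PowerSeries.coeff s' (Gp (M+1) n) := by
    rw [Gp, PowerSeries.coeff_mk]
  rw [hcoeff, Gp_main, map_sum, Finset.sum_range_succ']
  have hmain : PowerSeries.coeff s'
      ((-1 : PowerSeries ℤ)^0 * (PowerSeries.X : PowerSeries ℤ)^(0*n + tri 0) * (Ws 0 * Ws ((M+1)-0)))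
      = (Wm (M+1) ((((M+1) : ℕ) : ℤ) * (n:ℤ) - (s:ℤ)) : ℤ) := by
    rw [coeff_term]
    have h0 : 0*n + tri 0 = 0 := by simp [tri_zero]
    rw [h0, if_pos (Nat.zero_le s')]
    simp only [pow_zero, one_mul, Nat.sub_zero]
    rw [conv_zero, hs'cast]
  rw [hmain]
  have hsum : ∑ j ∈ Finset.range (M+1), PowerSeries.coeff s'
        ((-1 : PowerSeries ℤ)^(j+1) * (PowerSeries.X : PowerSeries ℤ)^((j+1)*n + tri (j+1))
          * (Ws (j+1) * Ws ((M+1)-(j+1))))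
      = ∑ i ∈ Finset.Icc r M, (-1 : ℤ) ^ ((M+1) - i) *
        ∑ k ∈ Finset.range
            (((n : ℤ) * (i : ℤ) - (s : ℤ) - (tri ((M+1) - i) : ℤ) + 1).toNat),
          (Wm i (k : ℤ) : ℤ) *
            (Wm ((M+1) - i) ((n : ℤ) * (i : ℤ) - (s : ℤ) - (tri ((M+1) - i) : ℤ) - (k : ℤ)) : ℤ) := by
    have hstep1 : ∀ j ∈ Finset.range (M+1), PowerSeries.coeff s'
        ((-1 : PowerSeries ℤ)^(j+1) * (PowerSeries.X : PowerSeries ℤ)^((j+1)*n + tri (j+1))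
          * (Ws (j+1) * Ws ((M+1)-(j+1))))
        = (-1 : ℤ) ^ ((M+1) - (M-j)) *
          ∑ k ∈ Finset.range
              (((n : ℤ) * ((M-j : ℕ) : ℤ) - (s : ℤ) - (tri ((M+1) - (M-j)) : ℤ) + 1).toNat),
            (Wm (M-j) (k : ℤ) : ℤ) *
              (Wm ((M+1) - (M-j)) ((n : ℤ) * ((M-j : ℕ) : ℤ) - (s : ℤ) - (tri ((M+1) - (M-j)) : ℤ) - (k : ℤ)) : ℤ) := by
      intro j hj
      rw [Finset.mem_range] at hj
      rw [term_eq M n s s' hss' j (by omega), show (M+1)-(M-j) = j+1 from by omega]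
    rw [Finset.sum_congr rfl hstep1]
    have hstep2 : ∑ j ∈ Finset.range (M+1), (fun i => (-1 : ℤ) ^ ((M+1) - i) *
          ∑ k ∈ Finset.range
              (((n : ℤ) * (i : ℤ) - (s : ℤ) - (tri ((M+1) - i) : ℤ) + 1).toNat),
            (Wm i (k : ℤ) : ℤ) *
              (Wm ((M+1) - i) ((n : ℤ) * (i : ℤ) - (s : ℤ) - (tri ((M+1) - i) : ℤ) - (k : ℤ)) : ℤ)) (M - j)
        = ∑ i ∈ Finset.range (M+1), (fun i => (-1 : ℤ) ^ ((M+1) - i) *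
          ∑ k ∈ Finset.range
              (((n : ℤ) * (i : ℤ) - (s : ℤ) - (tri ((M+1) - i) : ℤ) + 1).toNat),
            (Wm i (k : ℤ) : ℤ) *
              (Wm ((M+1) - i) ((n : ℤ) * (i : ℤ) - (s : ℤ) - (tri ((M+1) - i) : ℤ) - (k : ℤ)) : ℤ)) i := by
      have := Finset.sum_range_reflect (fun i => (-1 : ℤ) ^ ((M+1) - i) *
          ∑ k ∈ Finset.range
              (((n : ℤ) * (i : ℤ) - (s : ℤ) - (tri ((M+1) - i) : ℤ) + 1).toNat),
            (Wm i (k : ℤ) : ℤ) *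
              (Wm ((M+1) - i) ((n : ℤ) * (i : ℤ) - (s : ℤ) - (tri ((M+1) - i) : ℤ) - (k : ℤ)) : ℤ)) (M+1)
      simpa only [Nat.add_sub_cancel] using this
    rw [hstep2]
    symm
    apply Finset.sum_subset
    · intro i hi
      rw [Finset.mem_Icc] at hi
      rw [Finset.mem_range]
      omega
    · intro i hi hni
      rw [Finset.mem_range] at hi
      rw [Finset.mem_Icc] at hni
      have hir : i < r := by omega
      have htri : 1 ≤ (tri ((M+1) - i) : ℤ) := by
        have h1 : (M+1) - i = (M-i)+1 := by omega
        rw [h1]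
        exact_mod_cast tri_pos (M-i)
      have hni2 : (n:ℤ) * (i:ℤ) ≤ (s:ℤ) := by
        have h1 : n * i ≤ (r-1) * n := by
          calc n * i = i * n := Nat.mul_comm n i
            _ ≤ (r-1) * n := Nat.mul_le_mul_right n (by omega)
        have h2 : n * i ≤ s := h1.trans hs1
        exact_mod_cast h2
      have hzero : ((n : ℤ) * (i : ℤ) - (s : ℤ) - (tri ((M+1) - i) : ℤ) + 1).toNat = 0 := by
        apply Int.toNat_of_nonpos
        linarith
      rw [hzero]
      simp
  rw [hsum]
  ring
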